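/- Let n ≥ 3. Let N be the normal closure in the Artin group A(Ã_{n-1}) of the single element (a_n·a_{n-1}⋯a_2)·(a_{n-1}·a_{n-2}⋯a_1)⁻¹. Then the quotient A(Ã_{n-1})/N is isomorphic to the braid group A(A_{n-1}) on n strands. -/

import Mathlib

namespace Stmt13

/-- The braid relator `x y x (y x y)⁻¹` (weight 3). -/
def braidRel {γ : Type} (x y : FreeGroup γ) : FreeGroup γ := x * y * x * (y * x * y)⁻¹

/-- The commutation relator `x y (y x)⁻¹` (weight 2). -/
def commRel {γ : Type} (x y : FreeGroup γ) : FreeGroup γ := x * y * (y * x)⁻¹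

/-- Relations of the Artin group `A(Ã_{n-1})`: the generator indexed by `i : Fin n`
is `a_{i+1}`; cyclically adjacent generators braid, all other pairs commute. -/
def AtildeRels (n : ℕ) : Set (FreeGroup (Fin n)) :=
  { r | ∃ i j : Fin n,
      ((j : ℕ) = ((i : ℕ) + 1) % n ∧ r = braidRel (.of i) (.of j)) ∨
      (i ≠ j ∧ (j : ℕ) ≠ ((i : ℕ) + 1) % n ∧ (i : ℕ) ≠ ((j : ℕ) + 1) % n ∧
        r = commRel (.of i) (.of j)) }

/-- The Artin group `A(Ã_{n-1})`. -/
abbrev Atilde (n : ℕ) : Type := PresentedGroup (AtildeRels n)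

/-- The standard generator `a_i` (for `1 ≤ i ≤ n`) of `A(Ã_{n-1})`. -/
def a (n : ℕ) (i : ℕ) : Atilde n :=
  if h : 0 < n then PresentedGroup.of ⟨(i - 1) % n, Nat.mod_lt _ h⟩ else 1

/-- The descending product `a_m · a_{m-1} ⋯ a_k` in `A(Ã_{n-1})`. -/
def dprod (n : ℕ) (k m : ℕ) : Atilde n :=
  ((List.range' k (m + 1 - k)).reverse.map (a n)).prod

/-- Relations of the braid group `A(A_m)` on `m + 1` strands: the generator
indexed by `i : Fin m` is `σ_{i+1}`; adjacent generators braid, distant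
generators commute. -/
def braidRels (m : ℕ) : Set (FreeGroup (Fin m)) :=
  { r | ∃ i j : Fin m,
      ((j : ℕ) = (i : ℕ) + 1 ∧ r = braidRel (.of i) (.of j)) ∨
      ((i : ℕ) + 2 ≤ (j : ℕ) ∧ r = commRel (.of i) (.of j)) }

/-- The braid group on `m + 1` strands, i.e. the Artin group `A(A_m)`. -/
abbrev BraidGroup (m : ℕ) : Type := PresentedGroup (braidRels m)

namespace Aux

lemma mk_rel {α : Type} {rels : Set (FreeGroup α)} {r : FreeGroup α} (h : r ∈ rels) :
    (QuotientGroup.mk r : PresentedGroup rels) = 1 :=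
  (QuotientGroup.eq_one_iff r).mpr (Subgroup.subset_normalClosure h)

lemma of_braid {α : Type} {rels : Set (FreeGroup α)} {i j : α}
    (h : braidRel (FreeGroup.of i) (FreeGroup.of j) ∈ rels) :
    (PresentedGroup.of i : PresentedGroup rels) * PresentedGroup.of j * PresentedGroup.of i
      = PresentedGroup.of j * PresentedGroup.of i * PresentedGroup.of j := by
  have h1 := mk_rel h
  rw [braidRel] at h1
  have h2 : (PresentedGroup.mk rels) (FreeGroup.of i * FreeGroup.of j * FreeGroup.of i *
      (FreeGroup.of j * FreeGroup.of i * FreeGroup.of j)⁻¹) = 1 := h1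
  rw [map_mul, map_mul, map_mul, map_inv, map_mul, mul_inv_eq_one] at h2
  exact h2

lemma of_comm {α : Type} {rels : Set (FreeGroup α)} {i j : α}
    (h : commRel (FreeGroup.of i) (FreeGroup.of j) ∈ rels) :
    Commute (PresentedGroup.of i : PresentedGroup rels) (PresentedGroup.of j) := by
  have h1 := mk_rel h
  rw [commRel] at h1
  have h2 : (PresentedGroup.mk rels) (FreeGroup.of i * FreeGroup.of j *
      (FreeGroup.of j * FreeGroup.of i)⁻¹) = 1 := h1
  rw [map_mul, map_inv, map_mul, map_mul, mul_inv_eq_one] at h2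
  exact h2

section RevProd

variable {M N : Type*} [Monoid M] [Monoid N]

/-- descending product `f (k+l-1) * ⋯ * f k`. -/
def rp (f : ℕ → M) (k l : ℕ) : M := ((List.range' k l).reverse.map f).prod

@[simp] lemma rp_zero (f : ℕ → M) (k : ℕ) : rp f k 0 = 1 := rfl

lemma rp_succ (f : ℕ → M) (k l : ℕ) : rp f k (l + 1) = f (k + l) * rp f k l := by
  simp [rp, List.range'_1_concat]

lemma rp_bot (f : ℕ → M) (k l : ℕ) : rp f k (l + 1) = rp f (k + 1) l * f k := by
  simp [rp, List.range'_succ]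

lemma rp_congr {f g : ℕ → M} (k l : ℕ) (h : ∀ i, k ≤ i → i < k + l → f i = g i) :
    rp f k l = rp g k l := by
  induction l with
  | zero => rfl
  | succ l ih =>
      rw [rp_succ, rp_succ, h _ (by omega) (by omega),
        ih (fun i h1 h2 => h i h1 (by omega))]

lemma rp_shift (f : ℕ → M) (k l : ℕ) : rp f (k + 1) l = rp (fun i => f (i + 1)) k l := by
  induction l with
  | zero => rfl
  | succ l ih =>
      rw [rp_succ, rp_succ, ih]
      have : k + 1 + l = (k + l) + 1 := by omega
      rw [this]

lemma rp_shift2 (f : ℕ → M) (l : ℕ) : rp f 2 l = rp (fun i => f (i + 1)) 1 l :=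
  rp_shift f 1 l

lemma map_rp (φ : M →* N) (f : ℕ → M) (k l : ℕ) : φ (rp f k l) = rp (fun i => φ (f i)) k l := by
  simp only [rp, map_list_prod, List.map_map, Function.comp_def]

end RevProd

section GroupLemmas

variable {G : Type*} [Group G]

lemma two_gen {x y : G} (h : x * y * x = y * x * y) :
    (y * x * y⁻¹) * x * (y * x * y⁻¹) = x * (y * x * y⁻¹) * x := by
  have key : y⁻¹ * x * y = x * y * x⁻¹ := by
    apply mul_left_cancel (a := y)
    calc y * (y⁻¹ * x * y) = x * y := by group
      _ = (x * y * x) * x⁻¹ := by group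
      _ = (y * x * y) * x⁻¹ := by rw [h]
      _ = y * (x * y * x⁻¹) := by group
  have hL : (y * x * y⁻¹) * x * (y * x * y⁻¹) = y * (x * x) := by
    calc (y * x * y⁻¹) * x * (y * x * y⁻¹)
        = y * x * (y⁻¹ * x * y) * x * y⁻¹ := by group
      _ = y * x * (x * y * x⁻¹) * x * y⁻¹ := by rw [key]
      _ = y * (x * x) := by group
  have hR : x * (y * x * y⁻¹) * x = y * (x * x) := by
    calc x * (y * x * y⁻¹) * x = (x * y * x) * (y⁻¹ * x) := by group
      _ = (y * x * y) * (y⁻¹ * x) := by rw [h]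
      _ = y * (x * x) := by group
  rw [hL, hR]

end GroupLemmas

end Aux

namespace Aux2
open Aux

def sb (p k : ℕ) : BraidGroup (p + 2) :=
  if h : k < p + 2 then PresentedGroup.of ⟨k, h⟩ else 1

lemma sb_eq (p k : ℕ) (h : k < p + 2) : sb p k = PresentedGroup.of ⟨k, h⟩ := dif_pos h

lemma braid_sb (p k : ℕ) (h : k + 1 < p + 2) :
    sb p k * sb p (k + 1) * sb p k = sb p (k + 1) * sb p k * sb p (k + 1) := by
  have hk : k < p + 2 := by omega
  rw [sb_eq p k hk, sb_eq p (k + 1) h]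
  exact of_braid ⟨⟨k, hk⟩, ⟨k + 1, h⟩, Or.inl ⟨rfl, rfl⟩⟩

lemma comm_sb (p k l : ℕ) (h : k + 2 ≤ l) : Commute (sb p k) (sb p l) := by
  by_cases hl : l < p + 2
  · have hk : k < p + 2 := by omega
    rw [sb_eq p k hk, sb_eq p l hl]
    exact of_comm ⟨⟨k, hk⟩, ⟨l, hl⟩, Or.inr ⟨h, rfl⟩⟩
  · have h1 : sb p l = 1 := dif_neg hl
    rw [h1]
    exact Commute.one_right _

def Tb (p k : ℕ) : BraidGroup (p + 2) := rp (sb p) 1 k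

lemma Tb_zero (p : ℕ) : Tb p 0 = 1 := rfl

lemma Tb_succ (p k : ℕ) : Tb p (k + 1) = sb p (k + 1) * Tb p k := by
  have h := rp_succ (sb p) 1 k
  rw [Nat.add_comm 1 k] at h
  exact h

lemma comm_sb_Tb (p l q : ℕ) (h : l + 2 ≤ q) : Commute (sb p q) (Tb p l) := by
  induction l with
  | zero => exact Commute.one_right _
  | succ l ih =>
      rw [Tb_succ]
      exact Commute.mul_right (comm_sb p (l + 1) q (by omega)).symm (ih (by omega))

lemma conj_Tb (p j : ℕ) (hj : 1 ≤ j) : ∀ k, j + 1 ≤ k → k < p + 2 →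
    sb p j * Tb p k = Tb p k * sb p (j + 1) := by
  intro k
  induction k with
  | zero => omega
  | succ k ih =>
      intro hk hkm
      rcases Nat.lt_or_ge (j + 1) (k + 1) with hlt | hge
      · have h1 : j + 1 ≤ k := by omega
        calc sb p j * Tb p (k + 1)
            = (sb p j * sb p (k + 1)) * Tb p k := by rw [Tb_succ]; group
          _ = (sb p (k + 1) * sb p j) * Tb p k := by
                rw [(comm_sb p j (k + 1) (by omega)).eq]
          _ = sb p (k + 1) * (sb p j * Tb p k) := by group
          _ = sb p (k + 1) * (Tb p k * sb p (j + 1)) := by rw [ih h1 (by omega)]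
          _ = Tb p (k + 1) * sb p (j + 1) := by rw [Tb_succ]; group
      · obtain rfl : k = j := by omega
        obtain ⟨j', rfl⟩ : ∃ j', k = j' + 1 := ⟨k - 1, by omega⟩
        calc sb p (j' + 1) * Tb p (j' + 1 + 1)
            = (sb p (j' + 1) * sb p (j' + 1 + 1) * sb p (j' + 1)) * Tb p j' := by
              rw [Tb_succ, Tb_succ]; group
          _ = (sb p (j' + 1 + 1) * sb p (j' + 1) * sb p (j' + 1 + 1)) * Tb p j' := by
              rw [braid_sb p (j' + 1) (by omega)]
          _ = (sb p (j' + 1 + 1) * sb p (j' + 1)) * (sb p (j' + 1 + 1) * Tb p j') := by group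
          _ = (sb p (j' + 1 + 1) * sb p (j' + 1)) * (Tb p j' * sb p (j' + 1 + 1)) := by
              rw [(comm_sb_Tb p j' (j' + 1 + 1) (by omega)).eq]
          _ = Tb p (j' + 1 + 1) * sb p (j' + 1 + 1) := by rw [Tb_succ, Tb_succ]; group

def Wb (p : ℕ) : ℕ → BraidGroup (p + 2)
  | 0 => 1
  | (k + 1) => Wb p k * (sb p k)⁻¹

lemma comm_sb_Wb (p k q : ℕ) (h : k + 1 ≤ q) : Commute (sb p q) (Wb p k) := by
  induction k with
  | zero => exact Commute.one_right _
  | succ k ih =>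
      show Commute (sb p q) (Wb p k * (sb p k)⁻¹)
      exact Commute.mul_right (ih (by omega)) ((comm_sb p k q (by omega)).symm.inv_right)

lemma U_eq (p : ℕ) : ∀ k, k < p + 2 →
    Tb p k * sb p 0 * (Tb p k)⁻¹ = Wb p k * sb p k * (Wb p k)⁻¹ := by
  intro k
  induction k with
  | zero => intro _; show Tb p 0 * sb p 0 * (Tb p 0)⁻¹ = 1 * sb p 0 * (1 : BraidGroup (p+2))⁻¹
            rw [Tb_zero]
  | succ k ih =>
      intro hk
      have hcomm : Commute (sb p (k + 1)) (Wb p k) := comm_sb_Wb p k (k + 1) le_rfl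
      have hc2 : (Wb p k)⁻¹ * (sb p (k + 1))⁻¹ = (sb p (k + 1))⁻¹ * (Wb p k)⁻¹ :=
        (hcomm.symm.inv_left.inv_right).eq
      have hI : sb p (k + 1) * sb p k * (sb p (k + 1))⁻¹ = (sb p k)⁻¹ * sb p (k + 1) * sb p k := by
        have hb := braid_sb p k hk
        apply mul_left_cancel (a := sb p k)
        calc sb p k * (sb p (k + 1) * sb p k * (sb p (k + 1))⁻¹)
            = (sb p k * sb p (k + 1) * sb p k) * (sb p (k + 1))⁻¹ := by group
          _ = (sb p (k + 1) * sb p k * sb p (k + 1)) * (sb p (k + 1))⁻¹ := by rw [hb]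
          _ = sb p k * ((sb p k)⁻¹ * sb p (k + 1) * sb p k) := by group
      calc Tb p (k + 1) * sb p 0 * (Tb p (k + 1))⁻¹
          = sb p (k + 1) * (Tb p k * sb p 0 * (Tb p k)⁻¹) * (sb p (k + 1))⁻¹ := by
            rw [Tb_succ]; group
        _ = sb p (k + 1) * (Wb p k * sb p k * (Wb p k)⁻¹) * (sb p (k + 1))⁻¹ := by
            rw [ih (by omega)]
        _ = (sb p (k + 1) * Wb p k) * sb p k * ((Wb p k)⁻¹ * (sb p (k + 1))⁻¹) := by group
        _ = (Wb p k * sb p (k + 1)) * sb p k * ((sb p (k + 1))⁻¹ * (Wb p k)⁻¹) := by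
            rw [hcomm.eq, hc2]
        _ = Wb p k * (sb p (k + 1) * sb p k * (sb p (k + 1))⁻¹) * (Wb p k)⁻¹ := by group
        _ = Wb p k * ((sb p k)⁻¹ * sb p (k + 1) * sb p k) * (Wb p k)⁻¹ := by rw [hI]
        _ = (Wb p k * (sb p k)⁻¹) * sb p (k + 1) * (Wb p k * (sb p k)⁻¹)⁻¹ := by group
        _ = Wb p (k + 1) * sb p (k + 1) * (Wb p (k + 1))⁻¹ := rfl

def Ab (p : ℕ) : BraidGroup (p + 2) := Tb p (p + 1) * sb p 0 * (Tb p (p + 1))⁻¹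

lemma Ab_def (p : ℕ) : Ab p = Tb p (p + 1) * sb p 0 * (Tb p (p + 1))⁻¹ := rfl

lemma braid_top (p : ℕ) :
    sb p (p + 1) * Ab p * sb p (p + 1) = Ab p * sb p (p + 1) * Ab p := by
  have hU : Tb p p * sb p 0 * (Tb p p)⁻¹ = Wb p p * sb p p * (Wb p p)⁻¹ := U_eq p p (by omega)
  have hA : Ab p = sb p (p + 1) * (Wb p p * sb p p * (Wb p p)⁻¹) * (sb p (p + 1))⁻¹ := by
    rw [Ab_def, ← hU, Tb_succ]; group
  have hw : Commute (sb p (p + 1)) (Wb p p) := comm_sb_Wb p p (p + 1) le_rfl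
  have hw2 : (Wb p p)⁻¹ * sb p (p + 1) = sb p (p + 1) * (Wb p p)⁻¹ := (hw.symm.inv_left).eq
  have hb := braid_sb p p (by omega)
  have hkey : (Wb p p * sb p p * (Wb p p)⁻¹) * sb p (p + 1) * (Wb p p * sb p p * (Wb p p)⁻¹)
      = sb p (p + 1) * (Wb p p * sb p p * (Wb p p)⁻¹) * sb p (p + 1) := by
    calc (Wb p p * sb p p * (Wb p p)⁻¹) * sb p (p + 1) * (Wb p p * sb p p * (Wb p p)⁻¹)
        = Wb p p * sb p p * ((Wb p p)⁻¹ * sb p (p + 1) * Wb p p) * sb p p * (Wb p p)⁻¹ := by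
          group
      _ = Wb p p * sb p p * (sb p (p + 1) * (Wb p p)⁻¹ * Wb p p) * sb p p * (Wb p p)⁻¹ := by
          rw [hw2]
      _ = Wb p p * (sb p p * sb p (p + 1) * sb p p) * (Wb p p)⁻¹ := by group
      _ = Wb p p * (sb p (p + 1) * sb p p * sb p (p + 1)) * (Wb p p)⁻¹ := by rw [hb]
      _ = (Wb p p * sb p (p + 1)) * sb p p * (sb p (p + 1) * (Wb p p)⁻¹) := by group
      _ = (sb p (p + 1) * Wb p p) * sb p p * ((Wb p p)⁻¹ * sb p (p + 1)) := by
          rw [← hw.eq, hw2]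
      _ = sb p (p + 1) * (Wb p p * sb p p * (Wb p p)⁻¹) * sb p (p + 1) := by group
  calc sb p (p + 1) * Ab p * sb p (p + 1)
      = sb p (p + 1) * (sb p (p + 1) * (Wb p p * sb p p * (Wb p p)⁻¹) * (sb p (p + 1))⁻¹) *
          sb p (p + 1) := by rw [hA]
    _ = sb p (p + 1) * (sb p (p + 1) * (Wb p p * sb p p * (Wb p p)⁻¹) * sb p (p + 1)) *
          (sb p (p + 1))⁻¹ := by group
    _ = sb p (p + 1) * ((Wb p p * sb p p * (Wb p p)⁻¹) * sb p (p + 1) *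
          (Wb p p * sb p p * (Wb p p)⁻¹)) * (sb p (p + 1))⁻¹ := by rw [hkey]
    _ = (sb p (p + 1) * (Wb p p * sb p p * (Wb p p)⁻¹) * (sb p (p + 1))⁻¹) * sb p (p + 1) *
          (sb p (p + 1) * (Wb p p * sb p p * (Wb p p)⁻¹) * (sb p (p + 1))⁻¹) := by group
    _ = Ab p * sb p (p + 1) * Ab p := by rw [hA]

lemma braid_conj {G : Type*} [Group G] {x y g : G} (hc : Commute g y) (h : x * y * x = y * x * y) :
    (g * x * g⁻¹) * y * (g * x * g⁻¹) = y * (g * x * g⁻¹) * y := by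
  have hc3 : g⁻¹ * y * g = y := by rw [hc.inv_left.eq]; group
  calc (g * x * g⁻¹) * y * (g * x * g⁻¹) = g * x * (g⁻¹ * y * g) * x * g⁻¹ := by group
    _ = g * x * y * x * g⁻¹ := by rw [hc3]
    _ = g * (x * y * x) * g⁻¹ := by group
    _ = g * (y * x * y) * g⁻¹ := by rw [h]
    _ = (g * y) * x * (y * g⁻¹) := by group
    _ = (y * g) * x * (y * g⁻¹) := by rw [hc.eq]
    _ = (y * g) * x * (g⁻¹ * y) := by rw [← hc.inv_left.eq]
    _ = y * (g * x * g⁻¹) * y := by group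

lemma braid_bot (p : ℕ) : ∀ k, k + 1 < p + 2 →
    (Tb p (k + 1) * sb p 0 * (Tb p (k + 1))⁻¹) * sb p 0 * (Tb p (k + 1) * sb p 0 * (Tb p (k + 1))⁻¹)
      = sb p 0 * (Tb p (k + 1) * sb p 0 * (Tb p (k + 1))⁻¹) * sb p 0 := by
  intro k
  induction k with
  | zero =>
      intro hk
      have hT1 : Tb p 1 = sb p 1 := by
        have h := Tb_succ p 0
        rw [Tb_zero, mul_one] at h
        exact h
      rw [hT1]
      exact two_gen (braid_sb p 0 (by omega))
  | succ k ih =>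
      intro hk
      have hV : Tb p (k + 1 + 1) * sb p 0 * (Tb p (k + 1 + 1))⁻¹
          = sb p (k + 1 + 1) * (Tb p (k + 1) * sb p 0 * (Tb p (k + 1))⁻¹) * (sb p (k + 1 + 1))⁻¹ := by
        rw [Tb_succ]; group
      rw [hV]
      exact braid_conj ((comm_sb p 0 (k + 1 + 1) (by omega)).symm) (ih (by omega))

lemma braid_A0 (p : ℕ) : Ab p * sb p 0 * Ab p = sb p 0 * Ab p * sb p 0 :=
  braid_bot p p (by omega)

lemma comm_A (p j : ℕ) (h1 : 1 ≤ j) (h2 : j ≤ p) : Ab p * sb p j = sb p j * Ab p := by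
  have hT := conj_Tb p j h1 (p + 1) (by omega) (by omega)
  have h3 : (Tb p (p + 1))⁻¹ * sb p j = sb p (j + 1) * (Tb p (p + 1))⁻¹ := by
    calc (Tb p (p + 1))⁻¹ * sb p j
        = (Tb p (p + 1))⁻¹ * (sb p j * Tb p (p + 1)) * (Tb p (p + 1))⁻¹ := by group
      _ = (Tb p (p + 1))⁻¹ * (Tb p (p + 1) * sb p (j + 1)) * (Tb p (p + 1))⁻¹ := by rw [hT]
      _ = sb p (j + 1) * (Tb p (p + 1))⁻¹ := by group
  have hc : Commute (sb p 0) (sb p (j + 1)) := comm_sb p 0 (j + 1) (by omega)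
  calc Ab p * sb p j
      = Tb p (p + 1) * sb p 0 * ((Tb p (p + 1))⁻¹ * sb p j) := by rw [Ab_def]; group
    _ = Tb p (p + 1) * sb p 0 * (sb p (j + 1) * (Tb p (p + 1))⁻¹) := by rw [h3]
    _ = Tb p (p + 1) * (sb p 0 * sb p (j + 1)) * (Tb p (p + 1))⁻¹ := by group
    _ = Tb p (p + 1) * (sb p (j + 1) * sb p 0) * (Tb p (p + 1))⁻¹ := by rw [hc.eq]
    _ = (Tb p (p + 1) * sb p (j + 1)) * sb p 0 * (Tb p (p + 1))⁻¹ := by group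
    _ = (sb p j * Tb p (p + 1)) * sb p 0 * (Tb p (p + 1))⁻¹ := by rw [← hT]
    _ = sb p j * Ab p := by rw [Ab_def]; group

end Aux2

namespace Aux3
open Aux Aux2

def sA (p k : ℕ) : Atilde (p + 3) := a (p + 3) (k + 1)

lemma sA_eq (p k : ℕ) (h : k < p + 3) : sA p k = PresentedGroup.of ⟨k, h⟩ := by
  rw [sA, a, dif_pos (by omega : 0 < p + 3)]
  congr 1
  apply Fin.ext
  show (k + 1 - 1) % (p + 3) = k
  simp [Nat.mod_eq_of_lt h]

lemma braid_sA (p k : ℕ) (h : k + 1 < p + 3) :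
    sA p k * sA p (k + 1) * sA p k = sA p (k + 1) * sA p k * sA p (k + 1) := by
  have hk : k < p + 3 := by omega
  rw [sA_eq p k hk, sA_eq p (k + 1) h]
  exact of_braid ⟨⟨k, hk⟩, ⟨k + 1, h⟩, Or.inl ⟨(Nat.mod_eq_of_lt h).symm, rfl⟩⟩

lemma comm_sA (p k l : ℕ) (h1 : k + 2 ≤ l) (h2 : l ≤ p + 1) :
    Commute (sA p k) (sA p l) := by
  have hk : k < p + 3 := by omega
  have hl : l < p + 3 := by omega
  rw [sA_eq p k hk, sA_eq p l hl]
  refine of_comm ⟨⟨k, hk⟩, ⟨l, hl⟩, Or.inr ⟨?_, ?_, ?_, rfl⟩⟩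
  · simp only [ne_eq, Fin.mk.injEq]; omega
  · show (l : ℕ) ≠ (k + 1) % (p + 3)
    rw [Nat.mod_eq_of_lt (by omega)]; omega
  · show (k : ℕ) ≠ (l + 1) % (p + 3)
    rw [Nat.mod_eq_of_lt (by omega)]; omega

def fmap (p : ℕ) : Fin (p + 3) → BraidGroup (p + 2) :=
  fun i => if (i : ℕ) = p + 2 then Ab p else sb p (i : ℕ)

lemma fmap_check (p : ℕ) : ∀ r ∈ AtildeRels (p + 3), FreeGroup.lift (fmap p) r = 1 := by
  rintro r ⟨i, j, (⟨hij, rfl⟩ | ⟨hne, hne1, hne2, rfl⟩)⟩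
  · simp only [braidRel, map_mul, map_inv, FreeGroup.lift_apply_of]
    rw [mul_inv_eq_one]
    have hi : (i : ℕ) < p + 3 := i.isLt
    have hj : (j : ℕ) < p + 3 := j.isLt
    rcases Nat.lt_or_ge (i : ℕ) (p + 2) with hip | hip
    · rcases Nat.lt_or_ge (j : ℕ) (p + 2) with hjp | hjp
      · have hj' : (j : ℕ) = (i : ℕ) + 1 := by
          rw [Nat.mod_eq_of_lt (by omega)] at hij; exact hij
        simp only [fmap]
        rw [if_neg (by omega), if_neg (by omega), hj']
        exact braid_sb p i (by omega)
      · have hj' : (j : ℕ) = p + 2 := by omega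
        have hi' : (i : ℕ) = p + 1 := by
          rw [Nat.mod_eq_of_lt (by omega)] at hij; omega
        simp only [fmap]
        rw [if_neg (by omega), if_pos hj', hi']
        exact braid_top p
    · have hi' : (i : ℕ) = p + 2 := by omega
      have hmod : (p + 2 + 1) % (p + 3) = 0 := by
        rw [show p + 2 + 1 = p + 3 from rfl]; exact Nat.mod_self _
      have hj' : (j : ℕ) = 0 := by
        rw [hi', hmod] at hij; exact hij
      simp only [fmap]
      rw [if_pos hi', if_neg (by omega), hj']
      exact braid_A0 p
  · simp only [commRel, map_mul, map_inv, FreeGroup.lift_apply_of]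
    rw [mul_inv_eq_one]
    have hi : (i : ℕ) < p + 3 := i.isLt
    have hj : (j : ℕ) < p + 3 := j.isLt
    rcases Nat.lt_or_ge (i : ℕ) (p + 2) with hip | hip
    · rcases Nat.lt_or_ge (j : ℕ) (p + 2) with hjp | hjp
      · have h1 : (j : ℕ) ≠ (i : ℕ) + 1 := by
          rw [Nat.mod_eq_of_lt (by omega)] at hne1; exact hne1
        have h2 : (i : ℕ) ≠ (j : ℕ) + 1 := by
          rw [Nat.mod_eq_of_lt (by omega)] at hne2; exact hne2
        have h0 : (i : ℕ) ≠ (j : ℕ) := fun h => hne (Fin.ext h)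
        simp only [fmap]
        rw [if_neg (by omega), if_neg (by omega)]
        rcases Nat.lt_or_ge (i : ℕ) (j : ℕ) with hl | hl
        · exact (comm_sb p i j (by omega)).eq
        · exact ((comm_sb p j i (by omega)).symm).eq
      · have hj' : (j : ℕ) = p + 2 := by omega
        have h1 : (i : ℕ) ≠ p + 1 := by
          intro hcon
          exact hne1 (by rw [hcon, Nat.mod_eq_of_lt (by omega), hj'])
        have hmod : (p + 2 + 1) % (p + 3) = 0 := by
          rw [show p + 2 + 1 = p + 3 from rfl]; exact Nat.mod_self _
        have h2 : (i : ℕ) ≠ 0 := by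
          rw [hj', hmod] at hne2
          exact hne2
        simp only [fmap]
        rw [if_neg (by omega), if_pos hj']
        exact (comm_A p i (by omega) (by omega)).symm
    · have hi' : (i : ℕ) = p + 2 := by omega
      have hmod : (p + 2 + 1) % (p + 3) = 0 := by
        rw [show p + 2 + 1 = p + 3 from rfl]; exact Nat.mod_self _
      have h1 : (j : ℕ) ≠ 0 := by
        rw [hi', hmod] at hne1
        exact hne1
      have hj2 : (j : ℕ) ≠ p + 2 := by
        intro hcon
        exact hne (Fin.ext (by rw [hi', hcon]))
      have h2 : (j : ℕ) ≠ p + 1 := by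
        intro hcon
        exact hne2 (by rw [hcon, Nat.mod_eq_of_lt (by omega), hi'])
      simp only [fmap]
      rw [if_pos hi', if_neg hj2]
      exact comm_A p j (by omega) (by omega)

noncomputable def phi0 (p : ℕ) : Atilde (p + 3) →* BraidGroup (p + 2) :=
  PresentedGroup.toGroup (fmap_check p)

lemma phi0_of (p : ℕ) (i : Fin (p + 3)) : phi0 p (PresentedGroup.of i) = fmap p i :=
  PresentedGroup.toGroup.of _

lemma a_eq (p i : ℕ) :
    a (p + 3) i = PresentedGroup.of (⟨(i - 1) % (p + 3), Nat.mod_lt _ (by omega)⟩ : Fin (p + 3)) :=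
  dif_pos (by omega)

lemma dprod_eq (n k m : ℕ) : dprod n k m = rp (a n) k (m + 1 - k) := rfl

lemma phi_a (p i : ℕ) (h2 : 1 ≤ i) (h3 : i ≤ p + 2) : phi0 p (a (p + 3) i) = sb p (i - 1) := by
  rw [a_eq, phi0_of]
  have hm : (i - 1) % (p + 3) = i - 1 := Nat.mod_eq_of_lt (by omega)
  simp only [fmap, hm]
  rw [if_neg (by omega)]

lemma phi_a_top (p : ℕ) : phi0 p (a (p + 3) (p + 3)) = Ab p := by
  rw [a_eq, phi0_of]
  have hm : (p + 3 - 1) % (p + 3) = p + 2 := by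
    rw [show p + 3 - 1 = p + 2 from rfl]
    exact Nat.mod_eq_of_lt (by omega)
  simp only [fmap, hm]
  simp

lemma phi_rp_mid (p : ℕ) : rp (fun i => phi0 p (a (p + 3) i)) 2 (p + 1) = Tb p (p + 1) := by
  have h1 : rp (fun i => phi0 p (a (p + 3) i)) 2 (p + 1)
      = rp (fun i => sb p (i - 1)) 2 (p + 1) :=
    rp_congr 2 (p + 1) (fun i hi1 hi2 => phi_a p i (by omega) (by omega))
  rw [h1, rp_shift2]
  have h2 : rp (fun i => sb p (i + 1 - 1)) 1 (p + 1) = rp (fun i => sb p i) 1 (p + 1) := by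
    apply rp_congr
    intro i _ _
    rw [Nat.add_sub_cancel]
  rw [h2]
  rfl

lemma phi_dtop (p : ℕ) : phi0 p (dprod (p + 3) 2 (p + 3)) = Ab p * Tb p (p + 1) := by
  rw [dprod_eq, show p + 3 + 1 - 2 = p + 1 + 1 from by omega, map_rp, rp_succ]
  have h1 : phi0 p (a (p + 3) (2 + (p + 1))) = Ab p := by
    rw [show 2 + (p + 1) = p + 3 from by omega]
    exact phi_a_top p
  show phi0 p (a (p + 3) (2 + (p + 1))) * rp (fun i => phi0 p (a (p + 3) i)) 2 (p + 1) = _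
  rw [h1, phi_rp_mid]

lemma phi_dbot (p : ℕ) : phi0 p (dprod (p + 3) 1 (p + 2)) = Tb p (p + 1) * sb p 0 := by
  rw [dprod_eq, show p + 2 + 1 - 1 = p + 1 + 1 from by omega, map_rp, rp_bot]
  show rp (fun i => phi0 p (a (p + 3) i)) (1 + 1) (p + 1) * phi0 p (a (p + 3) 1) = _
  rw [show (1 + 1 : ℕ) = 2 from rfl, phi_rp_mid, phi_a p 1 (by omega) (by omega)]

def bmap (p : ℕ) : Fin (p + 2) → Atilde (p + 3) := fun j => sA p (j : ℕ)

lemma bmap_check (p : ℕ) : ∀ r ∈ braidRels (p + 2), FreeGroup.lift (bmap p) r = 1 := by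
  rintro r ⟨i, j, (⟨hij, rfl⟩ | ⟨hij, rfl⟩)⟩
  · simp only [braidRel, map_mul, map_inv, FreeGroup.lift_apply_of, bmap]
    rw [mul_inv_eq_one, hij]
    exact braid_sA p i (by omega)
  · simp only [commRel, map_mul, map_inv, FreeGroup.lift_apply_of, bmap]
    rw [mul_inv_eq_one]
    exact (comm_sA p i j hij (by omega)).eq

noncomputable def psi0 (p : ℕ) : BraidGroup (p + 2) →* Atilde (p + 3) :=
  PresentedGroup.toGroup (bmap_check p)

lemma psi_sb (p k : ℕ) (h : k < p + 2) : psi0 p (sb p k) = sA p k := by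
  rw [sb_eq p k h, psi0, PresentedGroup.toGroup.of]
  rfl

lemma psi_Tb (p : ℕ) : psi0 p (Tb p (p + 1)) = rp (sA p) 1 (p + 1) := by
  rw [Tb, map_rp]
  exact rp_congr 1 (p + 1) (fun i h1 h2 => psi_sb p i (by omega))

lemma dtop_eq (p : ℕ) : dprod (p + 3) 2 (p + 3) = sA p (p + 2) * rp (sA p) 1 (p + 1) := by
  rw [dprod_eq, show p + 3 + 1 - 2 = p + 1 + 1 from by omega, rp_shift2, rp_succ]
  show sA p (1 + (p + 1)) * rp (sA p) 1 (p + 1) = _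
  rw [show 1 + (p + 1) = p + 2 from by omega]

lemma dbot_eq (p : ℕ) : dprod (p + 3) 1 (p + 2) = rp (sA p) 1 (p + 1) * sA p 0 := by
  rw [dprod_eq, show p + 2 + 1 - 1 = p + 1 + 1 from by omega, rp_bot, rp_shift]
  rfl

theorem main (p : ℕ) :
    Nonempty ((Atilde (p + 3) ⧸ Subgroup.normalClosure
        {dprod (p + 3) 2 (p + 3) * (dprod (p + 3) 1 (p + 2))⁻¹}) ≃* BraidGroup (p + 2)) := by
  have hker : phi0 p (dprod (p + 3) 2 (p + 3) * (dprod (p + 3) 1 (p + 2))⁻¹) = 1 := by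
    rw [map_mul, map_inv, phi_dtop, phi_dbot, Ab_def]; group
  have hN : ∀ x ∈ Subgroup.normalClosure
      {dprod (p + 3) 2 (p + 3) * (dprod (p + 3) 1 (p + 2))⁻¹}, phi0 p x = 1 := by
    intro x hx
    refine Subgroup.normalClosure_le_normal (N := (phi0 p).ker) ?_ hx
    intro y hy
    rw [Set.mem_singleton_iff] at hy
    subst hy
    exact MonoidHom.mem_ker.mpr hker
  refine ⟨MonoidHom.toMulEquiv
    (QuotientGroup.lift _ (phi0 p) (fun x hx => MonoidHom.mem_ker.mpr (hN x hx)))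
    ((QuotientGroup.mk' _).comp (psi0 p)) ?_ ?_⟩
  · -- composite on quotient = id
    apply QuotientGroup.monoidHom_ext
    apply PresentedGroup.ext
    intro x
    simp only [MonoidHom.comp_apply, MonoidHom.id_apply, QuotientGroup.mk'_apply]
    rw [QuotientGroup.lift_mk]
    by_cases hx : (x : ℕ) = p + 2
    · have hfx : phi0 p (PresentedGroup.of x) = Ab p := by
        rw [phi0_of]; simp only [fmap]; rw [if_pos hx]
      rw [hfx]
      have h1 : psi0 p (Ab p) = rp (sA p) 1 (p + 1) * sA p 0 * (rp (sA p) 1 (p + 1))⁻¹ := by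
        rw [Ab_def, map_mul, map_mul, map_inv, psi_Tb, psi_sb p 0 (by omega)]
      rw [h1]
      have hrel : (QuotientGroup.mk (dprod (p + 3) 2 (p + 3) * (dprod (p + 3) 1 (p + 2))⁻¹) :
            Atilde (p + 3) ⧸ Subgroup.normalClosure
              {dprod (p + 3) 2 (p + 3) * (dprod (p + 3) 1 (p + 2))⁻¹}) = 1 :=
        (QuotientGroup.eq_one_iff _).mpr (Subgroup.subset_normalClosure rfl)
      rw [QuotientGroup.mk_mul, QuotientGroup.mk_inv, mul_inv_eq_one] at hrel
      have e1 := congrArg (fun z : Atilde (p + 3) => (QuotientGroup.mk z :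
        Atilde (p + 3) ⧸ Subgroup.normalClosure
          {dprod (p + 3) 2 (p + 3) * (dprod (p + 3) 1 (p + 2))⁻¹})) (dtop_eq p)
      have e2 := congrArg (fun z : Atilde (p + 3) => (QuotientGroup.mk z :
        Atilde (p + 3) ⧸ Subgroup.normalClosure
          {dprod (p + 3) 2 (p + 3) * (dprod (p + 3) 1 (p + 2))⁻¹})) (dbot_eq p)
      rw [e1, e2, QuotientGroup.mk_mul, QuotientGroup.mk_mul] at hrel
      have hofx : (PresentedGroup.of x : Atilde (p + 3)) = sA p (p + 2) := by
        rw [sA_eq p (p + 2) (by omega)]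
        congr 1
        exact Fin.ext hx
      rw [hofx]
      simp only [QuotientGroup.mk_mul, QuotientGroup.mk_inv]
      rw [← hrel]
      group
    · have hfx : phi0 p (PresentedGroup.of x) = sb p (x : ℕ) := by
        rw [phi0_of]; simp only [fmap]; rw [if_neg hx]
      rw [hfx, psi_sb p x (by omega), sA_eq p x x.isLt]
  · -- composite on braid group = id
    apply PresentedGroup.ext
    intro x
    simp only [MonoidHom.comp_apply, MonoidHom.id_apply, QuotientGroup.mk'_apply]
    have h1 : psi0 p (PresentedGroup.of x) = sA p (x : ℕ) := by
      rw [psi0, PresentedGroup.toGroup.of]; rfl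
    rw [h1, sA_eq p x (by omega), QuotientGroup.lift_mk, phi0_of]
    simp only [fmap]
    rw [if_neg (by have := x.isLt; omega), sb_eq p x x.isLt]

end Aux3

/-- For `n ≥ 3`, the quotient of `A(Ã_{n-1})` by the normal
closure of `(a_n ⋯ a_2) · (a_{n-1} ⋯ a_1)⁻¹` is isomorphic to the braid group
`A(A_{n-1})` on `n` strands. -/
theorem quotient_Atilde_iso_braid_group (n : ℕ) (hn : 3 ≤ n) :
    Nonempty ((Atilde n ⧸ Subgroup.normalClosure {dprod n 2 n * (dprod n 1 (n - 1))⁻¹}) ≃*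
      BraidGroup (n - 1)) := by
  obtain ⟨p, rfl⟩ : ∃ p, n = p + 3 := ⟨n - 3, by omega⟩
  exact Aux3.main p

end Stmt13
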